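/- Let R be a commutative local ring and s ∈ R (viewed as a constant power series in R[[x]]). Then K_s(R[[x]]) is quasipolar if and only if K_s(R) is quasipolar. -/

import Mathlib

/-- The generalized matrix ring `K_s(R)` with multiplier `s`. -/
@[ext]
structure GenMatrix (R : Type*) (s : R) where
  a : R
  b : R
  c : R
  d : R

namespace GenMatrix

variable {R : Type*} [Ring R] {s : R}

instance : Add (GenMatrix R s) :=
  ⟨fun X Y => ⟨X.a + Y.a, X.b + Y.b, X.c + Y.c, X.d + Y.d⟩⟩
instance : Neg (GenMatrix R s) := ⟨fun X => ⟨-X.a, -X.b, -X.c, -X.d⟩⟩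
instance : Zero (GenMatrix R s) := ⟨⟨0, 0, 0, 0⟩⟩
instance : One (GenMatrix R s) := ⟨⟨1, 0, 0, 1⟩⟩
instance : Mul (GenMatrix R s) :=
  ⟨fun X Y => ⟨X.a * Y.a + s * (X.b * Y.c), X.a * Y.b + X.b * Y.d,
    X.c * Y.a + X.d * Y.c, s * (X.c * Y.b) + X.d * Y.d⟩⟩

@[simp] lemma add_a (X Y : GenMatrix R s) : (X + Y).a = X.a + Y.a := rfl
@[simp] lemma add_b (X Y : GenMatrix R s) : (X + Y).b = X.b + Y.b := rfl
@[simp] lemma add_c (X Y : GenMatrix R s) : (X + Y).c = X.c + Y.c := rfl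
@[simp] lemma add_d (X Y : GenMatrix R s) : (X + Y).d = X.d + Y.d := rfl
@[simp] lemma neg_a (X : GenMatrix R s) : (-X).a = -X.a := rfl
@[simp] lemma neg_b (X : GenMatrix R s) : (-X).b = -X.b := rfl
@[simp] lemma neg_c (X : GenMatrix R s) : (-X).c = -X.c := rfl
@[simp] lemma neg_d (X : GenMatrix R s) : (-X).d = -X.d := rfl
@[simp] lemma zero_a : (0 : GenMatrix R s).a = 0 := rfl
@[simp] lemma zero_b : (0 : GenMatrix R s).b = 0 := rfl
@[simp] lemma zero_c : (0 : GenMatrix R s).c = 0 := rfl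
@[simp] lemma zero_d : (0 : GenMatrix R s).d = 0 := rfl
@[simp] lemma one_a : (1 : GenMatrix R s).a = 1 := rfl
@[simp] lemma one_b : (1 : GenMatrix R s).b = 0 := rfl
@[simp] lemma one_c : (1 : GenMatrix R s).c = 0 := rfl
@[simp] lemma one_d : (1 : GenMatrix R s).d = 1 := rfl
@[simp] lemma mul_a (X Y : GenMatrix R s) : (X * Y).a = X.a * Y.a + s * (X.b * Y.c) := rfl
@[simp] lemma mul_b (X Y : GenMatrix R s) : (X * Y).b = X.a * Y.b + X.b * Y.d := rfl
@[simp] lemma mul_c (X Y : GenMatrix R s) : (X * Y).c = X.c * Y.a + X.d * Y.c := rfl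
@[simp] lemma mul_d (X Y : GenMatrix R s) : (X * Y).d = s * (X.c * Y.b) + X.d * Y.d := rfl

instance : AddCommGroup (GenMatrix R s) where
  add_assoc X Y Z := by ext <;> simp [add_assoc]
  zero_add X := by ext <;> simp
  add_zero X := by ext <;> simp
  add_comm X Y := by ext <;> simp [add_comm]
  neg_add_cancel X := by ext <;> simp
  nsmul := nsmulRec
  zsmul := zsmulRec

section Central

variable [Fact (s ∈ Set.center R)]

lemma scomm (r : R) : r * s = s * r := Semigroup.mem_center_iff.mp Fact.out r

lemma sshift (r t : R) : r * (s * t) = s * (r * t) := by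
  rw [← mul_assoc, scomm (s := s), mul_assoc]

instance : Ring (GenMatrix R s) where
  __ := (inferInstance : AddCommGroup (GenMatrix R s))
  left_distrib X Y Z := by ext <;> simp [mul_add, add_mul] <;> abel
  right_distrib X Y Z := by ext <;> simp [mul_add, add_mul] <;> abel
  zero_mul X := by ext <;> simp
  mul_zero X := by ext <;> simp
  mul_assoc X Y Z := by
    ext <;> simp only [mul_a, mul_b, mul_c, mul_d, mul_add, add_mul, mul_assoc, sshift] <;> abel
  one_mul X := by ext <;> simp
  mul_one X := by ext <;> simp

end Central

instance central_of_comm {R : Type*} [CommRing R] (s : R) : Fact (s ∈ Set.center R) :=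
  ⟨by rw [Set.center_eq_univ]; trivial⟩

/-- `det_s` of a generalized matrix over a commutative ring. -/
def dets {R : Type*} {s : R} [CommRing R] (A : GenMatrix R s) : R :=
  A.a * A.d - s * (A.b * A.c)

/-- The trace of a generalized matrix. -/
def tr {R : Type*} {s : R} [Ring R] (A : GenMatrix R s) : R := A.a + A.d

end GenMatrix

/-- An element `a` is quasinilpotent if `1 + a*x` is a unit for every `x` commuting with `a`. -/
def IsQuasinilpotent {R : Type*} [Ring R] (a : R) : Prop :=
  ∀ x : R, a * x = x * a → IsUnit (1 + a * x)

/-- An element `a` is quasipolar if there is an idempotent `p` in the double commutant of `a`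
with `a + p` a unit and `a * p` quasinilpotent. -/
def IsQuasipolar {R : Type*} [Ring R] (a : R) : Prop :=
  ∃ p : R, IsIdempotentElem p ∧ (∀ y : R, y * a = a * y → p * y = y * p) ∧
    IsUnit (a + p) ∧ IsQuasinilpotent (a * p)

/-- A ring is quasipolar if every element is quasipolar. -/
def IsQuasipolarRing (R : Type*) [Ring R] : Prop := ∀ a : R, IsQuasipolar a

/-- An element is strongly clean if it is the sum of an idempotent and a unit that commute. -/
def IsStronglyClean {R : Type*} [Ring R] (a : R) : Prop :=
  ∃ e u : R, IsIdempotentElem e ∧ IsUnit u ∧ a = e + u ∧ e * u = u * e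

/-- A ring is strongly clean if every element is strongly clean. -/
def IsStronglyCleanRing (R : Type*) [Ring R] : Prop := ∀ a : R, IsStronglyClean a

/-- `a` is similar to `b` if `b = u⁻¹ * a * u` for some unit `u`. -/
def IsSimilar {R : Type*} [Ring R] (a b : R) : Prop :=
  ∃ u : Rˣ, b = ↑u⁻¹ * a * ↑u

/-- The Jacobson radical of a ring: the intersection of all maximal left ideals. -/
def JacobsonRadical (R : Type*) [Ring R] : Ideal R := Ideal.jacobson ⊥


section LocalHelpers

variable {S : Type*} [CommRing S] [IsLocalRing S]

lemma nonunit_add {x y : S} (hx : ¬IsUnit x) (hy : ¬IsUnit y) : ¬IsUnit (x + y) :=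
  fun h => (IsLocalRing.isUnit_or_isUnit_of_isUnit_add h).elim hx hy

lemma nonunit_mul {x : S} (y : S) (hx : ¬IsUnit x) : ¬IsUnit (x * y) :=
  fun h => hx (isUnit_of_mul_isUnit_left h)

lemma nonunit_mul' (y : S) {x : S} (hx : ¬IsUnit x) : ¬IsUnit (y * x) := by
  rw [mul_comm]; exact nonunit_mul y hx

lemma unit_add_nonunit {x y : S} (hx : IsUnit x) (hy : ¬IsUnit y) : IsUnit (x + y) := by
  have h : IsUnit ((x + y) + -y) := by rwa [add_neg_cancel_right]
  rcases IsLocalRing.isUnit_or_isUnit_of_isUnit_add h with h1 | h2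
  · exact h1
  · exact absurd (by rwa [IsUnit.neg_iff] at h2) hy

lemma one_add_nonunit {x : S} (hx : ¬IsUnit x) : IsUnit (1 + x) :=
  unit_add_nonunit isUnit_one hx

lemma idem_zero_or_one {e : S} (he : e * e = e) : e = 0 ∨ e = 1 := by
  rcases IsLocalRing.isUnit_or_isUnit_one_sub_self e with h | h
  · exact Or.inr (h.mul_left_cancel (by rw [he, mul_one]))
  · left
    obtain ⟨v, hv⟩ := h
    have h0 : e * (1 - e) = 0 := by ring_nf; linear_combination -he
    calc e = e * (1 - e) * ↑v⁻¹ := by rw [← hv, mul_assoc, v.mul_inv, mul_one]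
    _ = 0 := by rw [h0, zero_mul]

end LocalHelpers

namespace GenMatrix

section CommScalar

variable {S : Type*} [CommRing S] {s : S}

/-- scalar matrix -/
def scalar (l : S) : GenMatrix S s := ⟨l, 0, 0, l⟩

@[simp] lemma scalar_a (l : S) : (scalar (s := s) l).a = l := rfl
@[simp] lemma scalar_b (l : S) : (scalar (s := s) l).b = 0 := rfl
@[simp] lemma scalar_c (l : S) : (scalar (s := s) l).c = 0 := rfl
@[simp] lemma scalar_d (l : S) : (scalar (s := s) l).d = l := rfl

@[simp] lemma sub_a (X Y : GenMatrix S s) : (X - Y).a = X.a - Y.a := by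
  rw [sub_eq_add_neg, add_a, neg_a, ← sub_eq_add_neg]
@[simp] lemma sub_b (X Y : GenMatrix S s) : (X - Y).b = X.b - Y.b := by
  rw [sub_eq_add_neg, add_b, neg_b, ← sub_eq_add_neg]
@[simp] lemma sub_c (X Y : GenMatrix S s) : (X - Y).c = X.c - Y.c := by
  rw [sub_eq_add_neg, add_c, neg_c, ← sub_eq_add_neg]
@[simp] lemma sub_d (X Y : GenMatrix S s) : (X - Y).d = X.d - Y.d := by
  rw [sub_eq_add_neg, add_d, neg_d, ← sub_eq_add_neg]

@[simp] lemma scalar_zero : (scalar 0 : GenMatrix S s) = 0 := by ext <;> simp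
@[simp] lemma scalar_one : (scalar 1 : GenMatrix S s) = 1 := by ext <;> simp

lemma scalar_comm (l : S) (X : GenMatrix S s) : scalar l * X = X * scalar l := by
  ext <;> simp <;> ring

lemma scalar_mul_scalar (l m : S) :
    (scalar l : GenMatrix S s) * scalar m = scalar (l * m) := by ext <;> simp

lemma scalar_sub (l m : S) :
    (scalar (l - m) : GenMatrix S s) = scalar l - scalar m := by ext <;> simp

lemma scalar_add (l m : S) :
    (scalar (l + m) : GenMatrix S s) = scalar l + scalar m := by ext <;> simp

lemma tr_scalar_mul (l : S) (X : GenMatrix S s) : tr (scalar l * X) = l * tr X := by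
  simp [tr]; ring

lemma tr_sub (X Y : GenMatrix S s) : tr (X - Y) = tr X - tr Y := by simp [tr]; ring

lemma tr_one_sub (X : GenMatrix S s) : tr (1 - X) = 2 - tr X := by simp [tr]; ring

lemma dets_mul (X Y : GenMatrix S s) : dets (X * Y) = dets X * dets Y := by
  simp [dets]; ring

@[simp] lemma dets_one : dets (1 : GenMatrix S s) = 1 := by simp [dets]

lemma dets_one_sub (X : GenMatrix S s) : dets (1 - X) = 1 - tr X + dets X := by
  simp [dets, tr]; ring

lemma dets_one_add (X : GenMatrix S s) : dets (1 + X) = 1 + tr X + dets X := by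
  simp [dets, tr]; ring

lemma dets_one_add_scalar_mul (l : S) (X : GenMatrix S s) :
    dets (1 + scalar l * X) = 1 + l * tr X + l * l * dets X := by
  simp [dets, tr]; ring

lemma dets_one_add_mul_scalar (l : S) (X : GenMatrix S s) :
    dets (1 + X * scalar l) = 1 + l * tr X + l * l * dets X := by
  simp [dets, tr]; ring

/-- Cayley–Hamilton for generalized 2×2 matrices. -/
lemma mul_self_eq (X : GenMatrix S s) :
    X * X = scalar (tr X) * X - scalar (dets X) := by
  ext <;> simp [tr, dets] <;> ring

/-- polarization of Cayley–Hamilton -/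
lemma bilin (X Y : GenMatrix S s) :
    X * Y + Y * X =
      scalar (tr X) * Y + scalar (tr Y) * X - scalar (tr X * tr Y - tr (X * Y)) := by
  ext <;> simp [tr] <;> ring

lemma isUnit_iff_dets {A : GenMatrix S s} : IsUnit A ↔ IsUnit (dets A) := by
  constructor
  · rintro ⟨u, rfl⟩
    exact IsUnit.of_mul_eq_one (dets (↑u⁻¹ : GenMatrix S s))
      (by rw [← dets_mul, u.mul_inv, dets_one])
  · rintro ⟨v, hv⟩
    set B : GenMatrix S s := scalar ((↑v⁻¹ : S)) * (⟨A.d, -A.b, -A.c, A.a⟩ : GenMatrix S s)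
      with hB
    have hadj : A * (⟨A.d, -A.b, -A.c, A.a⟩ : GenMatrix S s) = scalar (dets A) := by
      ext <;> simp [dets] <;> ring
    have hadj' : (⟨A.d, -A.b, -A.c, A.a⟩ : GenMatrix S s) * A = scalar (dets A) := by
      ext <;> simp [dets] <;> ring
    have hvv : (↑v⁻¹ : S) * ↑v = 1 := v.inv_mul
    have h1 : A * B = 1 := by
      rw [hB, ← mul_assoc, ← scalar_comm, mul_assoc, hadj, scalar_mul_scalar,
        ← hv, hvv, scalar_one]
    have h2 : B * A = 1 := by
      rw [hB, mul_assoc, hadj', scalar_mul_scalar, ← hv, hvv, scalar_one]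
    exact ⟨⟨A, B, h1, h2⟩, rfl⟩

lemma scalar_unit_cancel {x : S} (hx : IsUnit x) {X Y : GenMatrix S s}
    (h : scalar x * X = scalar x * Y) : X = Y := by
  obtain ⟨v, rfl⟩ := hx
  have h2 := congrArg (fun Z => (scalar (↑v⁻¹ : S) : GenMatrix S s) * Z) h
  simpa [← mul_assoc, scalar_mul_scalar, v.inv_mul] using h2

end CommScalar

end GenMatrix
namespace GenMatrix

section LocalProps

variable {S : Type*} [CommRing S] [IsLocalRing S] {s : S}

theorem isQuasipolar_of_isUnit {A : GenMatrix S s} (h : IsUnit A) : IsQuasipolar A := by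
  refine ⟨0, by simp [IsIdempotentElem], fun y _ => by simp, by simpa using h, ?_⟩
  intro x _
  simpa using isUnit_one

theorem isQuasipolar_of_nonunits {A : GenMatrix S s} (ht : ¬IsUnit (tr A))
    (hd : ¬IsUnit (dets A)) : IsQuasipolar A := by
  refine ⟨1, by simp [IsIdempotentElem], fun y _ => by rw [one_mul, mul_one], ?_, ?_⟩
  · rw [isUnit_iff_dets, add_comm, dets_one_add, add_assoc]
    exact one_add_nonunit (nonunit_add ht hd)
  · rw [mul_one]
    intro Y hY
    have hWW : (A * Y) * (A * Y) = (A * A) * (Y * Y) := by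
      rw [mul_assoc, ← mul_assoc Y A Y, ← hY, mul_assoc A Y Y, ← mul_assoc]
    have hch := mul_self_eq (A * Y)
    have hchA := mul_self_eq A
    have E : scalar (tr (A * Y)) * (A * Y) =
        scalar (tr A) * (A * (Y * Y)) - scalar (dets A) * (Y * Y) + scalar (dets (A * Y)) := by
      have e2 : scalar (tr (A * Y)) * (A * Y) = (A * Y) * (A * Y) + scalar (dets (A * Y)) := by
        rw [hch, sub_add_cancel]
      rw [e2, hWW, hchA, sub_mul, mul_assoc]
    have hdW : ¬IsUnit (dets (A * Y)) := by
      rw [dets_mul]; exact nonunit_mul _ hd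
    have htW : ¬IsUnit (tr (A * Y)) := by
      intro hτ
      have hE := congrArg tr E
      rw [tr_scalar_mul] at hE
      have hrhs : tr (scalar (tr A) * (A * (Y * Y)) - scalar (dets A) * (Y * Y)
          + scalar (dets (A * Y))) =
          tr A * tr (A * (Y * Y)) - dets A * tr (Y * Y) + (dets (A * Y) + dets (A * Y)) := by
        simp [tr]; ring
      rw [hrhs] at hE
      have hnon : ¬IsUnit (tr (A * Y) * tr (A * Y)) := by
        rw [hE, sub_eq_add_neg]
        refine nonunit_add (nonunit_add (nonunit_mul _ ht) ?_) (nonunit_add hdW hdW)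
        rw [show -(dets A * tr (Y * Y)) = (-dets A) * tr (Y * Y) by ring]
        refine nonunit_mul _ (fun h => hd ?_)
        rwa [IsUnit.neg_iff] at h
      exact hnon (hτ.mul hτ)
    rw [isUnit_iff_dets, dets_one_add, add_assoc]
    exact one_add_nonunit (nonunit_add htW hdW)

/-- If the characteristic quadratic has a unit root `β` with nonunit coroot,
then `A` is quasipolar. -/
theorem isQuasipolar_of_root {A : GenMatrix S s} {β : S} (hβ : IsUnit β)
    (hα : ¬IsUnit (tr A - β)) (hroot : β * β - tr A * β + dets A = 0) :
    IsQuasipolar A := by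
  have hu : IsUnit (β - (tr A - β)) := by
    rw [sub_eq_add_neg]
    exact unit_add_nonunit hβ (fun h => hα (by rwa [IsUnit.neg_iff] at h))
  obtain ⟨v, hv⟩ := hu
  set w : S := (↑v⁻¹ : S) with hwdef
  have hw : (β - (tr A - β)) * w = 1 := by rw [← hv]; exact v.mul_inv
  simp only [tr, dets] at hroot hw hα
  obtain ⟨p, hpa, hpb, hpc, hpd⟩ :
      ∃ p : GenMatrix S s, p.a = w * (β - A.a) ∧ p.b = -(w * A.b) ∧ p.c = -(w * A.c) ∧
        p.d = w * (β - A.d) :=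
    ⟨⟨w * (β - A.a), -(w * A.b), -(w * A.c), w * (β - A.d)⟩, rfl, rfl, rfl, rfl⟩
  refine ⟨p, ?_, ?_, ?_, ?_⟩
  · -- idempotent
    ext
    · rw [mul_a, hpa, hpb, hpc]
      linear_combination (w * (β - A.a)) * hw - (w * w) * hroot
    · rw [mul_b, hpa, hpb, hpd]
      linear_combination (-(w * A.b)) * hw
    · rw [mul_c, hpa, hpc, hpd]
      linear_combination (-(w * A.c)) * hw
    · rw [mul_d, hpb, hpc, hpd]
      linear_combination (w * (β - A.d)) * hw - (w * w) * hroot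
  · -- double commutant
    intro Y hY
    have h1 := congrArg GenMatrix.a hY
    have h2 := congrArg GenMatrix.b hY
    have h3 := congrArg GenMatrix.c hY
    have h4 := congrArg GenMatrix.d hY
    simp only [mul_a, mul_b, mul_c, mul_d] at h1 h2 h3 h4
    ext
    · rw [mul_a, mul_a, hpa, hpb, hpc]; linear_combination w * h1
    · rw [mul_b, mul_b, hpa, hpb, hpd]; linear_combination w * h2
    · rw [mul_c, mul_c, hpa, hpc, hpd]; linear_combination w * h3
    · rw [mul_d, mul_d, hpb, hpc, hpd]; linear_combination w * h4
  · -- A + p is a unit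
    rw [isUnit_iff_dets]
    have hdets : dets (A + p) = β * ((1 - w) * (A.a + A.d - β) + w * β) := by
      simp only [dets, add_a, add_b, add_c, add_d, hpa, hpb, hpc, hpd]
      linear_combination ((1 - w) * (1 - w)) * hroot
    rw [hdets]
    refine hβ.mul ?_
    rw [add_comm]
    exact unit_add_nonunit ((IsUnit.of_mul_eq_one _ v.inv_mul).mul hβ)
      (nonunit_mul' _ hα)
  · -- quasinilpotent
    have hApEq : A * p = scalar (A.a + A.d - β) * p := by
      ext <;>
        simp only [mul_a, mul_b, mul_c, mul_d, scalar_a, scalar_b, scalar_c, scalar_d,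
          hpa, hpb, hpc, hpd] <;>
        [skip; ring; ring; skip] <;>
        linear_combination w * hroot
    intro Y _
    rw [hApEq, mul_assoc, isUnit_iff_dets, dets_one_add_scalar_mul, add_assoc]
    refine one_add_nonunit (nonunit_add ?_ ?_)
    · exact nonunit_mul _ hα
    · rw [show (A.a + A.d - β) * (A.a + A.d - β) * dets (p * Y)
          = (A.a + A.d - β) * ((A.a + A.d - β) * dets (p * Y)) by ring]
      exact nonunit_mul _ hα

end LocalProps

end GenMatrix
namespace GenMatrix

section LocalProps2

variable {S : Type*} [CommRing S] [IsLocalRing S] {s : S}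

/-- the "eigenvalue" lemma: a commuting idempotent with unit `2 - tr p`
compresses `A` to a scalar multiple. -/
lemma eigen {A p : GenMatrix S s} (hp2 : p * p = p) (hpA : p * A = A * p)
    (h2 : IsUnit ((2 : S) - tr p)) : A * p = scalar (tr (A * p)) * p := by
  have hwp : (A * p) * p = A * p := by rw [mul_assoc, hp2]
  have hpw : p * (A * p) = A * p := by rw [← mul_assoc, hpA, mul_assoc, hp2]
  have hbil := bilin (A * p) p
  rw [hwp, hpw] at hbil
  -- hbil : A*p + A*p = scalar α * p + scalar τ * (A*p) - scalar (α*τ - α)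
  have key : scalar ((2 : S) - tr p) * (A * p) =
      scalar (tr (A * p)) * p - scalar (tr (A * p) * tr p - tr (A * p)) := by
    have h2X : (scalar (2 : S) : GenMatrix S s) * (A * p) = A * p + A * p := by
      ext <;> simp <;> ring
    rw [scalar_sub, sub_mul, h2X, hbil]
    abel
  have key2 := congrArg (· * p) key
  simp only [mul_assoc, hwp, sub_mul, hp2] at key2
  -- key2 : scalar (2 - τ) * (A*p) = scalar α * p - scalar (α*τ - α) * p
  have key3 : scalar ((2 : S) - tr p) * (A * p) =
      scalar ((2 : S) - tr p) * (scalar (tr (A * p)) * p) := by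
    rw [key2, ← sub_mul, ← scalar_sub,
      show tr (A * p) - (tr (A * p) * tr p - tr (A * p)) = ((2 : S) - tr p) * tr (A * p)
        from by ring, ← scalar_mul_scalar, mul_assoc]
  exact scalar_unit_cancel h2 key3

theorem root_of_isQuasipolar {A : GenMatrix S s} (hqp : IsQuasipolar A)
    (ht : IsUnit (tr A)) (hd : ¬IsUnit (dets A)) :
    ∃ β : S, IsUnit β ∧ β * β - tr A * β + dets A = 0 := by
  obtain ⟨p, hp2, hcomm, hunit, hqn⟩ := hqp
  have hpA : p * A = A * p := hcomm A rfl
  have hdp : dets p * dets p = dets p := by rw [← dets_mul, hp2]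
  rcases idem_zero_or_one hdp with hdp0 | hdp1
  · -- dets p = 0
    by_cases hp0 : p = 0
    · rw [hp0, add_zero] at hunit
      exact absurd (isUnit_iff_dets.mp hunit) hd
    have h1τ : ¬IsUnit (1 - tr p) := by
      intro h
      apply hp0
      have hch := mul_self_eq p
      rw [hp2, hdp0, scalar_zero, sub_zero] at hch
      have h0 : scalar (1 - tr p) * p = scalar (1 - tr p) * 0 := by
        rw [mul_zero, scalar_sub, sub_mul, scalar_one, one_mul, ← hch, sub_self]
      exact scalar_unit_cancel h h0
    have hτu : IsUnit (tr p) := by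
      have h := one_add_nonunit (x := -(1 - tr p))
        (fun h' => h1τ (by rwa [IsUnit.neg_iff] at h'))
      rwa [show (1 : S) + -(1 - tr p) = tr p by ring] at h
    have h2τ : IsUnit ((2 : S) - tr p) := by
      have h := one_add_nonunit h1τ
      rwa [show (1 : S) + (1 - tr p) = 2 - tr p by ring] at h
    -- set q
    set q : GenMatrix S s := 1 - p with hqdef
    have hq2 : q * q = q := by
      have h := hp2.eq
      rw [hqdef]
      simp only [mul_sub, sub_mul, mul_one, one_mul, h]
      abel
    have hqA : q * A = A * q := by
      rw [hqdef, sub_mul, mul_sub, one_mul, mul_one, hpA]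
    have h2q : IsUnit ((2 : S) - tr q) := by
      rw [hqdef, tr_one_sub, show (2 : S) - (2 - tr p) = tr p by ring]
      exact hτu
    have hAp := eigen hp2 hpA h2τ
    have hAq := eigen hq2 hqA h2q
    set α := tr (A * p) with hα
    set β := tr (A * q) with hβ
    -- decomposition of A
    have hdecomp : A = scalar α * p + scalar β * q := by
      rw [← hAp, ← hAq, ← mul_add, hqdef]
      rw [show p + (1 - p) = (1 : GenMatrix S s) by abel, mul_one]
    -- β is a unit
    have hAplusp : A + p = scalar (α + 1) * p + scalar β * q := by
      rw [hdecomp, scalar_add, add_mul, scalar_one, one_mul]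
      abel
    have hdetAp : dets (A + p) = β * (β + (α + 1 - β) * tr p) := by
      have hcombo : dets (scalar (α + 1) * p + scalar β * (1 - p)) =
          β * β + (α + 1 - β) * β * tr p + (α + 1 - β) * (α + 1 - β) * dets p := by
        simp only [dets, tr, add_a, add_b, add_c, add_d, sub_a, sub_b, sub_c, sub_d,
          mul_a, mul_b, mul_c, mul_d, scalar_a, scalar_b, scalar_c, scalar_d,
          one_a, one_b, one_c, one_d]
        ring
      rw [hAplusp, hqdef, hcombo, hdp0]
      ring
    have hβu : IsUnit β := by
      have h := isUnit_iff_dets.mp hunit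
      rw [hdetAp] at h
      exact isUnit_of_mul_isUnit_left h
    -- the root equation
    have e1 : A * (A * q) = scalar (β * β) * q := by
      rw [hAq, ← mul_assoc, ← scalar_comm, mul_assoc, hAq, ← mul_assoc, scalar_mul_scalar]
    have e2 : A * (A * q) = scalar (tr A * β) * q - scalar (dets A) * q := by
      rw [← mul_assoc, mul_self_eq, sub_mul, mul_assoc, hAq, ← mul_assoc, scalar_mul_scalar]
    have e3 : scalar (β * β - tr A * β + dets A) * q = 0 := by
      rw [show β * β - tr A * β + dets A = β * β - (tr A * β - dets A) by ring,
        scalar_sub, sub_mul, scalar_sub, sub_mul, ← e1, e2]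
      abel
    have e4 := congrArg tr e3
    rw [tr_scalar_mul, show tr (0 : GenMatrix S s) = 0 by simp [tr]] at e4
    have htrq : IsUnit (tr q) := by rw [hqdef, tr_one_sub]; exact h2τ
    refine ⟨β, hβu, ?_⟩
    exact htrq.mul_left_cancel (by rw [mul_comm, e4, mul_zero])
  · -- dets p = 1 : p = 1, contradiction
    exfalso
    have hpu : IsUnit p := isUnit_iff_dets.mpr (by rw [hdp1]; exact isUnit_one)
    have hp1 : p = 1 := hpu.mul_left_cancel (by rw [hp2, mul_one])
    rw [hp1, mul_one] at hqn
    obtain ⟨τ, hτ⟩ := ht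
    have hcm : A * scalar (-(↑τ⁻¹ : S)) = scalar (-(↑τ⁻¹ : S)) * A := (scalar_comm _ _).symm
    have h := isUnit_iff_dets.mp (hqn (scalar (-(↑τ⁻¹ : S))) hcm)
    rw [dets_one_add_mul_scalar, ← hτ] at h
    rw [show (1 : S) + -↑τ⁻¹ * ↑τ + -↑τ⁻¹ * -↑τ⁻¹ * dets A
        = ↑τ⁻¹ * (↑τ⁻¹ * dets A) + (1 - ↑τ⁻¹ * ↑τ) by ring, τ.inv_mul, sub_self,
      add_zero] at h
    exact nonunit_mul' _ (nonunit_mul' _ hd) h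

end LocalProps2

end GenMatrix
section Hensel

open PowerSeries

variable {R : Type*} [CommRing R]

/-- simplified Newton iteration for the quadratic `z^2 - t z + d` -/
noncomputable def henselSeq (t d w b : PowerSeries R) : ℕ → PowerSeries R
  | 0 => b
  | n + 1 =>
      henselSeq t d w b n -
        (henselSeq t d w b n * henselSeq t d w b n - t * henselSeq t d w b n + d) * w

theorem hensel_quadratic (t d : PowerSeries R) (β₀ : R)
    (hu : IsUnit (2 * β₀ - constantCoeff t))
    (hroot : β₀ * β₀ - constantCoeff t * β₀ + constantCoeff d = 0) :
    ∃ β : PowerSeries R, constantCoeff β = β₀ ∧ β * β - t * β + d = 0 := by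
  have hU : IsUnit (2 * C β₀ - t) := by
    rw [PowerSeries.isUnit_iff_constantCoeff]
    simpa [map_ofNat] using hu
  obtain ⟨v, hv⟩ := hU
  set w : PowerSeries R := (↑v⁻¹ : PowerSeries R) with hwdef
  have hw : (2 * C β₀ - t) * w = 1 := by rw [← hv]; exact v.mul_inv
  set a : ℕ → PowerSeries R := henselSeq t d w (C β₀) with ha
  have ha0 : a 0 = C β₀ := rfl
  have hastep : ∀ n, a (n + 1) = a n - (a n * a n - t * a n + d) * w := fun n => rfl
  -- the invariant
  have hInv : ∀ n, (X : PowerSeries R) ^ (n + 1) ∣ (a n * a n - t * a n + d) ∧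
      (X : PowerSeries R) ∣ (a n - C β₀) := by
    intro n
    induction n with
    | zero =>
      constructor
      · rw [pow_one, PowerSeries.X_dvd_iff, ha0]
        simpa using hroot
      · rw [ha0, sub_self]
        exact dvd_zero _
    | succ n ih =>
      obtain ⟨hdvd, hne⟩ := ih
      have hXe : (X : PowerSeries R) ∣ (a n * a n - t * a n + d) :=
        dvd_trans (dvd_pow_self X (Nat.succ_ne_zero n)) hdvd
      have hfactor : a (n + 1) * a (n + 1) - t * a (n + 1) + d =
          (a n * a n - t * a n + d) *
            ((C β₀ - a n) * (2 * w) + (a n * a n - t * a n + d) * (w * w) +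
              (1 - (2 * C β₀ - t) * w)) := by
        rw [hastep]; ring
      have hw0 : (1 : PowerSeries R) - (2 * C β₀ - t) * w = 0 := by rw [hw, sub_self]
      constructor
      · rw [hfactor, hw0, add_zero, pow_succ]
        refine mul_dvd_mul hdvd (dvd_add ?_ ?_)
        · refine Dvd.dvd.mul_right ?_ _
          have : C β₀ - a n = -(a n - C β₀) := by ring
          rw [this]
          exact dvd_neg.mpr hne
        · exact Dvd.dvd.mul_right hXe _
      · rw [hastep]
        have : a n - (a n * a n - t * a n + d) * w - C β₀ =
            (a n - C β₀) - (a n * a n - t * a n + d) * w := by ring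
        rw [this]
        exact dvd_sub hne (Dvd.dvd.mul_right hXe _)
  have hdiff : ∀ n, (X : PowerSeries R) ^ (n + 1) ∣ (a (n + 1) - a n) := by
    intro n
    rw [hastep, show a n - (a n * a n - t * a n + d) * w - a n
        = -((a n * a n - t * a n + d) * w) by ring]
    exact dvd_neg.mpr (Dvd.dvd.mul_right (hInv n).1 _)
  have hstab : ∀ k n, k ≤ n → coeff k (a n) = coeff k (a k) := by
    intro k n hkn
    induction n with
    | zero => simp_all
    | succ n ih =>
      rcases Nat.lt_succ_iff_lt_or_eq.mp (Nat.lt_succ_of_le hkn) with h | h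
      · have h1 : coeff k (a (n + 1) - a n) = 0 :=
          PowerSeries.X_pow_dvd_iff.mp (hdiff n) k (by omega)
        rw [map_sub, sub_eq_zero] at h1
        rw [h1]
        exact ih (by omega)
      · subst h; rfl
  set β : PowerSeries R := PowerSeries.mk (fun k => coeff k (a k)) with hβ
  have hβa : ∀ n, (X : PowerSeries R) ^ (n + 1) ∣ (β - a n) := by
    intro n
    rw [PowerSeries.X_pow_dvd_iff]
    intro m hm
    rw [map_sub, hβ, coeff_mk, hstab m n (by omega), sub_self]
  refine ⟨β, ?_, ?_⟩
  · rw [← coeff_zero_eq_constantCoeff_apply, hβ, coeff_mk, ha0,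
      coeff_zero_eq_constantCoeff_apply, constantCoeff_C]
  · ext k
    rw [map_zero]
    have hdvd : (X : PowerSeries R) ^ (k + 1) ∣ (β * β - t * β + d) := by
      have hsplit : β * β - t * β + d =
          (a k * a k - t * a k + d) + (β - a k) * (β + a k - t) := by ring
      rw [hsplit]
      exact dvd_add (hInv k).1 (Dvd.dvd.mul_right (hβa k) _)
    exact PowerSeries.X_pow_dvd_iff.mp hdvd k (by omega)

end Hensel
/-- for a commutative local ring `R` and `s ∈ R` viewed as a constant power
series, `K_s(R[[x]])` is quasipolar iff `K_s(R)` is quasipolar. -/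
theorem genMatrix_powerSeries_const_isQuasipolarRing_iff {R : Type*} [CommRing R]
    [IsLocalRing R] (s : R) :
    IsQuasipolarRing (GenMatrix (PowerSeries R) (PowerSeries.C s)) ↔
      IsQuasipolarRing (GenMatrix R s) := by
  constructor
  · intro H A
    by_cases hd : IsUnit (GenMatrix.dets A)
    · exact GenMatrix.isQuasipolar_of_isUnit (GenMatrix.isUnit_iff_dets.mpr hd)
    by_cases ht : IsUnit (GenMatrix.tr A)
    swap
    · exact GenMatrix.isQuasipolar_of_nonunits ht hd
    set Ah : GenMatrix (PowerSeries R) (PowerSeries.C s) :=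
      ⟨PowerSeries.C A.a, PowerSeries.C A.b, PowerSeries.C A.c, PowerSeries.C A.d⟩
      with hAh
    have htr : GenMatrix.tr Ah = PowerSeries.C (GenMatrix.tr A) := by
      simp [GenMatrix.tr, hAh, map_add]
    have hdets : GenMatrix.dets Ah = PowerSeries.C (GenMatrix.dets A) := by
      simp [GenMatrix.dets, hAh, map_mul, map_sub]
    have htu : IsUnit (GenMatrix.tr Ah) := by rw [htr]; exact ht.map (PowerSeries.C)
    have hdu : ¬IsUnit (GenMatrix.dets Ah) := by
      rw [hdets]
      intro h
      exact hd (by simpa using h.map (PowerSeries.constantCoeff))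
    obtain ⟨B, hBu, hBroot⟩ := GenMatrix.root_of_isQuasipolar (H Ah) htu hdu
    rw [htr, hdets] at hBroot
    have hβu : IsUnit (PowerSeries.constantCoeff B) := hBu.map _
    have hroot : PowerSeries.constantCoeff B * PowerSeries.constantCoeff B -
        GenMatrix.tr A * PowerSeries.constantCoeff B + GenMatrix.dets A = 0 := by
      simpa using congrArg (PowerSeries.constantCoeff) hBroot
    have hα : ¬IsUnit (GenMatrix.tr A - PowerSeries.constantCoeff B) := by
      intro h
      refine hd ?_
      have heq : (GenMatrix.tr A - PowerSeries.constantCoeff B) *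
          PowerSeries.constantCoeff B = GenMatrix.dets A := by linear_combination -hroot
      exact heq ▸ h.mul hβu
    exact GenMatrix.isQuasipolar_of_root hβu hα hroot
  · intro H A
    by_cases hd : IsUnit (GenMatrix.dets A)
    · exact GenMatrix.isQuasipolar_of_isUnit (GenMatrix.isUnit_iff_dets.mpr hd)
    by_cases ht : IsUnit (GenMatrix.tr A)
    swap
    · exact GenMatrix.isQuasipolar_of_nonunits ht hd
    set A0 : GenMatrix R s := ⟨PowerSeries.constantCoeff A.a, PowerSeries.constantCoeff A.b,
      PowerSeries.constantCoeff A.c, PowerSeries.constantCoeff A.d⟩ with hA0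
    have htr : GenMatrix.tr A0 = PowerSeries.constantCoeff (GenMatrix.tr A) := by
      simp [GenMatrix.tr, hA0, map_add]
    have hdets : GenMatrix.dets A0 = PowerSeries.constantCoeff (GenMatrix.dets A) := by
      simp [GenMatrix.dets, hA0, map_mul, map_sub]
    have ht0 : IsUnit (GenMatrix.tr A0) := by
      rw [htr]; exact PowerSeries.isUnit_iff_constantCoeff.mp ht
    have hd0 : ¬IsUnit (GenMatrix.dets A0) := by
      rw [hdets]; exact fun h => hd (PowerSeries.isUnit_iff_constantCoeff.mpr h)
    obtain ⟨β₀, hβ₀u, hroot₀⟩ := GenMatrix.root_of_isQuasipolar (H A0) ht0 hd0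
    have hα₀ : ¬IsUnit (GenMatrix.tr A0 - β₀) := by
      intro h
      refine hd0 ?_
      have heq : (GenMatrix.tr A0 - β₀) * β₀ = GenMatrix.dets A0 := by
        linear_combination -hroot₀
      exact heq ▸ h.mul hβ₀u
    have h2β : IsUnit (2 * β₀ - PowerSeries.constantCoeff (GenMatrix.tr A)) := by
      rw [← htr, show 2 * β₀ - GenMatrix.tr A0 = β₀ + -(GenMatrix.tr A0 - β₀) by ring]
      exact unit_add_nonunit hβ₀u (fun h => hα₀ (by rwa [IsUnit.neg_iff] at h))
    obtain ⟨β, hβc, hβroot⟩ := hensel_quadratic (GenMatrix.tr A) (GenMatrix.dets A) β₀ h2β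
      (by rw [← htr, ← hdets]; exact hroot₀)
    have hβu : IsUnit β := PowerSeries.isUnit_iff_constantCoeff.mpr (by rw [hβc]; exact hβ₀u)
    have hα : ¬IsUnit (GenMatrix.tr A - β) := by
      intro h
      have h2 := PowerSeries.isUnit_iff_constantCoeff.mp h
      rw [map_sub, hβc, ← htr] at h2
      exact hα₀ h2
    exact GenMatrix.isQuasipolar_of_root hβu hα hβroot
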